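/- Let A : ℝ → gl_n(ℝ) satisfy A' = -tr(S(A)²)·A + (1/2)[A,[A,Aᵗ]] - (1/2)tr(A)·[A,Aᵗ] with A(t) ≠ 0 for all t, and let B = A/‖A‖. Then (d/dt)tr(B) = (1/2)·‖A‖²·‖[B,Bᵗ]‖²·tr(B) and (d/dt)tr(B²) = ‖A‖²·‖[B,Bᵗ]‖²·tr(B²). In particular, the sign of tr(B(t)) and of tr(B(t)²) is constant along the flow. -/

import Mathlib

open Matrix Filter

noncomputable section

abbrev Mat (n : ℕ) := Matrix (Fin n) (Fin n) ℝ

/-- Commutator bracket of matrices. -/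
def bkt {n : ℕ} (X Y : Mat n) : Mat n := X * Y - Y * X

/-- Frobenius inner product ⟨X,Y⟩ = tr(XYᵗ). -/
def frob {n : ℕ} (X Y : Mat n) : ℝ := Matrix.trace (X * Yᵀ)

/-- Squared Frobenius norm ‖X‖² = tr(XXᵗ). -/
def sqnorm {n : ℕ} (X : Mat n) : ℝ := frob X X

/-- Symmetric part S(X) = (X+Xᵗ)/2. -/
def symPart {n : ℕ} (X : Mat n) : Mat n := (1/2 : ℝ) • (X + Xᵀ)

/-- Right-hand side of the bracket flow ODE. -/
def rhs {n : ℕ} (A : Mat n) : Mat n :=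
  (-(Matrix.trace (symPart A * symPart A))) • A
    + (1/2 : ℝ) • bkt A (bkt A Aᵀ)
    - ((1/2 : ℝ) * Matrix.trace A) • bkt A Aᵀ

lemma trace_bkt {n : ℕ} (X Y : Mat n) : Matrix.trace (bkt X Y) = 0 := by
  simp [bkt, Matrix.trace_sub, Matrix.trace_mul_comm X Y]

lemma trace_bkt_mul {n : ℕ} (X C : Mat n) : Matrix.trace (bkt X C * X) = 0 := by
  simp only [bkt, sub_mul, Matrix.trace_sub]
  rw [Matrix.trace_mul_cycle C X X]; exact sub_self _

lemma trace_bktT_mul {n : ℕ} (X : Mat n) : Matrix.trace (bkt X Xᵀ * X) = 0 := by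
  simp only [bkt, sub_mul, Matrix.trace_sub]
  rw [Matrix.trace_mul_cycle Xᵀ X X]; exact sub_self _

lemma trace_bktT_mulT {n : ℕ} (X : Mat n) : Matrix.trace (bkt X Xᵀ * Xᵀ) = 0 := by
  simp only [bkt, sub_mul, Matrix.trace_sub]
  rw [Matrix.trace_mul_cycle X Xᵀ Xᵀ]; exact sub_self _

lemma bktT_transpose {n : ℕ} (X : Mat n) : (bkt X Xᵀ)ᵀ = bkt X Xᵀ := by
  simp [bkt, Matrix.transpose_sub, Matrix.transpose_mul]

lemma trace_bkt_mulT {n : ℕ} (X C : Mat n) :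
    Matrix.trace (bkt X C * Xᵀ) = Matrix.trace (C * (Xᵀ*X)) - Matrix.trace (C * (X*Xᵀ)) := by
  simp only [bkt, sub_mul, Matrix.trace_sub, ← Matrix.mul_assoc]
  rw [Matrix.trace_mul_cycle X C Xᵀ, Matrix.trace_mul_cycle Xᵀ X C]

lemma trace_bkt2_mulT {n : ℕ} (X : Mat n) :
    Matrix.trace (bkt X (bkt X Xᵀ) * Xᵀ) = -sqnorm (bkt X Xᵀ) := by
  rw [trace_bkt_mulT, ← Matrix.trace_sub, ← Matrix.mul_sub]
  have h2 : Xᵀ * X - X * Xᵀ = -(bkt X Xᵀ) := by simp [bkt]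
  rw [h2, Matrix.mul_neg, Matrix.trace_neg, sqnorm, frob, bktT_transpose]

lemma trace_rhs {n : ℕ} (a : Mat n) :
    Matrix.trace (rhs a) = -(Matrix.trace (symPart a * symPart a)) * Matrix.trace a := by
  simp [rhs, Matrix.trace_add, Matrix.trace_sub, Matrix.trace_smul, trace_bkt, smul_eq_mul]

lemma trace_rhs_mul {n : ℕ} (a : Mat n) :
    Matrix.trace (rhs a * a) = -(Matrix.trace (symPart a * symPart a)) * Matrix.trace (a * a) := by
  simp only [rhs, add_mul, sub_mul, Matrix.smul_mul, Matrix.trace_add, Matrix.trace_sub,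
    Matrix.trace_smul, trace_bkt_mul, trace_bktT_mul, smul_eq_mul]
  ring

lemma trace_rhs_mulT {n : ℕ} (a : Mat n) :
    Matrix.trace (rhs a * aᵀ) = -(Matrix.trace (symPart a * symPart a)) * sqnorm a
      - (1/2) * sqnorm (bkt a aᵀ) := by
  simp only [rhs, add_mul, sub_mul, Matrix.smul_mul, Matrix.trace_add, Matrix.trace_sub,
    Matrix.trace_smul, trace_bktT_mulT, trace_bkt2_mulT, smul_eq_mul, sqnorm, frob]
  ring

section deriv
variable {n : ℕ} {A : ℝ → Mat n} {D : Mat n} {t : ℝ}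

lemma hasDerivAt_traceA (h : ∀ i j, HasDerivAt (fun s => A s i j) (D i j) t) :
    HasDerivAt (fun s => Matrix.trace (A s)) (Matrix.trace D) t := by
  simp only [Matrix.trace, Matrix.diag]
  exact HasDerivAt.fun_sum (fun i _ => h i i)

lemma hasDerivAt_traceA2 (h : ∀ i j, HasDerivAt (fun s => A s i j) (D i j) t) :
    HasDerivAt (fun s => Matrix.trace (A s * A s)) (2 * Matrix.trace (D * A t)) t := by
  have H : HasDerivAt (fun s => ∑ i, ∑ j, A s i j * A s j i)
      (∑ i, ∑ j, (D i j * A t j i + A t i j * D j i)) t :=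
    HasDerivAt.fun_sum fun i _ => HasDerivAt.fun_sum fun j _ => (h i j).mul (h j i)
  have e1 : ∀ s, Matrix.trace (A s * A s) = ∑ i, ∑ j, A s i j * A s j i := by
    intro s; simp [Matrix.trace, Matrix.diag, Matrix.mul_apply]
  have e2 : (∑ i, ∑ j, (D i j * A t j i + A t i j * D j i)) = 2 * Matrix.trace (D * A t) := by
    rw [two_mul]
    nth_rewrite 2 [Matrix.trace_mul_comm]
    simp [Matrix.trace, Matrix.diag, Matrix.mul_apply, Finset.sum_add_distrib]
  simpa only [e1, e2] using H

lemma hasDerivAt_sqnormA (h : ∀ i j, HasDerivAt (fun s => A s i j) (D i j) t) :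
    HasDerivAt (fun s => sqnorm (A s)) (2 * Matrix.trace (D * (A t)ᵀ)) t := by
  have H : HasDerivAt (fun s => ∑ i, ∑ j, A s i j * A s i j)
      (∑ i, ∑ j, (D i j * A t i j + A t i j * D i j)) t :=
    HasDerivAt.fun_sum fun i _ => HasDerivAt.fun_sum fun j _ => (h i j).mul (h i j)
  have e1 : ∀ s, sqnorm (A s) = ∑ i, ∑ j, A s i j * A s i j := by
    intro s; simp [sqnorm, frob, Matrix.trace, Matrix.diag, Matrix.mul_apply, Matrix.transpose_apply]
  have e2 : (∑ i, ∑ j, (D i j * A t i j + A t i j * D i j)) = 2 * Matrix.trace (D * (A t)ᵀ) := by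
    simp [Matrix.trace, Matrix.diag, Matrix.mul_apply, Matrix.transpose_apply,
      Finset.sum_add_distrib, two_mul, mul_comm]
  simpa only [e1, e2] using H

end deriv

lemma sqnorm_pos {n : ℕ} {X : Mat n} (h : X ≠ 0) : 0 < sqnorm X := by
  have e1 : sqnorm X = ∑ i, ∑ j, X i j * X i j := by
    simp [sqnorm, frob, Matrix.trace, Matrix.diag, Matrix.mul_apply, Matrix.transpose_apply]
  obtain ⟨i, j, hij⟩ : ∃ i j, X i j ≠ 0 := by
    by_contra hc; push_neg at hc
    exact h (Matrix.ext fun i j => hc i j)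
  rw [e1]
  exact Finset.sum_pos' (fun i _ => Finset.sum_nonneg fun j _ => mul_self_nonneg _)
    ⟨i, Finset.mem_univ i, Finset.sum_pos' (fun j _ => mul_self_nonneg _)
      ⟨j, Finset.mem_univ j, mul_self_pos.mpr hij⟩⟩

lemma bkt_smul {n : ℕ} (c : ℝ) (X : Mat n) : bkt (c • X) (c • X)ᵀ = (c*c) • bkt X Xᵀ := by
  simp [bkt, Matrix.transpose_smul, Matrix.smul_mul, Matrix.mul_smul, smul_smul, smul_sub]

lemma sqnorm_smul {n : ℕ} (c : ℝ) (X : Mat n) : sqnorm (c • X) = c^2 * sqnorm X := by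
  simp only [sqnorm, frob, Matrix.transpose_smul, Matrix.smul_mul, Matrix.mul_smul, smul_smul,
    Matrix.trace_smul, smul_eq_mul]
  ring

lemma sign_mul_exp (x r : ℝ) : Real.sign (x * Real.exp r) = Real.sign x := by
  rcases lt_trichotomy x 0 with h | h | h
  · rw [Real.sign_of_neg h, Real.sign_of_neg (mul_neg_of_neg_of_pos h (Real.exp_pos r))]
  · simp [h]
  · rw [Real.sign_of_pos h, Real.sign_of_pos (mul_pos h (Real.exp_pos r))]

lemma sign_const_of_linODE (y c : ℝ → ℝ) (hc : Continuous c)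
    (hy : ∀ t, HasDerivAt y (c t * y t) t) (s t : ℝ) :
    Real.sign (y s) = Real.sign (y t) := by
  set φ : ℝ → ℝ := fun u => ∫ x in (0:ℝ)..u, c x with hφdef
  have hφ : ∀ u, HasDerivAt φ (c u) u := fun u =>
    intervalIntegral.integral_hasDerivAt_right (hc.intervalIntegrable 0 u)
      (hc.aestronglyMeasurable.stronglyMeasurableAtFilter) hc.continuousAt
  set g : ℝ → ℝ := fun u => y u * Real.exp (-φ u) with hgdef
  have hg : ∀ u, HasDerivAt g 0 u := by
    intro u
    have := (hy u).mul ((hφ u).neg.exp)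
    change HasDerivAt (fun x => y x * Real.exp (-φ x)) _ u at this
    convert this using 1
    ring
  have hconst : ∀ a b : ℝ, g a = g b := fun a b =>
    is_const_of_deriv_eq_zero (fun u => (hg u).differentiableAt) (fun u => (hg u).deriv) a b
  have hyu : ∀ u, y u = g u * Real.exp (φ u) := by
    intro u
    rw [hgdef]
    simp [mul_assoc, ← Real.exp_add]
  have h1 : Real.sign (y t) = Real.sign (g t) := by
    conv_lhs => rw [hyu t]
    exact sign_mul_exp _ _
  have h2 : Real.sign (y s) = Real.sign (g s) := by
    conv_lhs => rw [hyu s]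
    exact sign_mul_exp _ _
  rw [h1, h2, hconst s t]

theorem stmt16 {n : ℕ} (A : ℝ → Mat n)
    (hA : ∀ t : ℝ, ∀ i j, HasDerivAt (fun s => A s i j) (rhs (A t) i j) t)
    (hne : ∀ t : ℝ, A t ≠ 0)
    (B : ℝ → Mat n) (hB : ∀ t, B t = (Real.sqrt (sqnorm (A t)))⁻¹ • A t) :
    (∀ t : ℝ, HasDerivAt (fun s => Matrix.trace (B s))
      ((1/2) * sqnorm (A t) * sqnorm (bkt (B t) (B t)ᵀ) * Matrix.trace (B t)) t) ∧
    (∀ t : ℝ, HasDerivAt (fun s => Matrix.trace (B s * B s))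
      (sqnorm (A t) * sqnorm (bkt (B t) (B t)ᵀ) * Matrix.trace (B t * B t)) t) ∧
    (∀ s t : ℝ, Real.sign (Matrix.trace (B s)) = Real.sign (Matrix.trace (B t)) ∧
      Real.sign (Matrix.trace (B s * B s)) = Real.sign (Matrix.trace (B t * B t))) := by
  have hpos : ∀ t, 0 < sqnorm (A t) := fun t => sqnorm_pos (hne t)
  -- derivative facts
  have key1 : ∀ t : ℝ, HasDerivAt (fun s => Matrix.trace (B s))
      ((1/2) * sqnorm (A t) * sqnorm (bkt (B t) (B t)ᵀ) * Matrix.trace (B t)) t := by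
    intro t
    set a := A t with ha
    set k := Matrix.trace (symPart a * symPart a) with hk
    have hNpos : 0 < sqnorm a := hpos t
    have hsN : Real.sqrt (sqnorm a) ≠ 0 := ne_of_gt (Real.sqrt_pos.mpr hNpos)
    have hss : Real.sqrt (sqnorm a) * Real.sqrt (sqnorm a) = sqnorm a :=
      Real.mul_self_sqrt hNpos.le
    have hτ : HasDerivAt (fun s => Matrix.trace (A s)) (-k * Matrix.trace a) t := by
      have h0 := hasDerivAt_traceA (A := A) (D := rhs a) (hA t)
      rwa [trace_rhs] at h0
    have hNd : HasDerivAt (fun s => sqnorm (A s))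
        (-2*k*sqnorm a - sqnorm (bkt a aᵀ)) t := by
      have h0 := hasDerivAt_sqnormA (A := A) (D := rhs a) (hA t)
      rw [← ha, trace_rhs_mulT] at h0
      convert h0 using 1; ring
    have hsq : HasDerivAt (fun s => Real.sqrt (sqnorm (A s)))
        ((-2*k*sqnorm a - sqnorm (bkt a aᵀ)) / (2 * Real.sqrt (sqnorm a))) t :=
      hNd.sqrt (ne_of_gt hNpos)
    have hinv : HasDerivAt (fun s => (Real.sqrt (sqnorm (A s)))⁻¹)
        (-((-2*k*sqnorm a - sqnorm (bkt a aᵀ)) / (2 * Real.sqrt (sqnorm a)))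
          / (Real.sqrt (sqnorm a))^2) t := hsq.inv hsN
    have hmul : HasDerivAt (fun s => (Real.sqrt (sqnorm (A s)))⁻¹ * Matrix.trace (A s)) _ t :=
      hinv.mul hτ
    have heq : (fun s => Matrix.trace (B s))
        = fun s => (Real.sqrt (sqnorm (A s)))⁻¹ * Matrix.trace (A s) :=
      funext fun s => by rw [hB s, Matrix.trace_smul, smul_eq_mul]
    rw [heq]
    convert hmul using 1
    rw [hB t, bkt_smul, sqnorm_smul, Matrix.trace_smul, smul_eq_mul]
    rw [← hss]
    field_simp
    rw [Real.sqrt_sq (Real.sqrt_nonneg _), ← ha]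
    ring
  have key2 : ∀ t : ℝ, HasDerivAt (fun s => Matrix.trace (B s * B s))
      (sqnorm (A t) * sqnorm (bkt (B t) (B t)ᵀ) * Matrix.trace (B t * B t)) t := by
    intro t
    set a := A t with ha
    set k := Matrix.trace (symPart a * symPart a) with hk
    have hNpos : 0 < sqnorm a := hpos t
    have hN0 : sqnorm a ≠ 0 := ne_of_gt hNpos
    have hss : Real.sqrt (sqnorm a) * Real.sqrt (sqnorm a) = sqnorm a :=
      Real.mul_self_sqrt hNpos.le
    have hq : HasDerivAt (fun s => Matrix.trace (A s * A s))
        (-2*k*Matrix.trace (a*a)) t := by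
      have h0 := hasDerivAt_traceA2 (A := A) (D := rhs a) (hA t)
      rw [← ha, trace_rhs_mul] at h0
      convert h0 using 1; ring
    have hNd : HasDerivAt (fun s => sqnorm (A s))
        (-2*k*sqnorm a - sqnorm (bkt a aᵀ)) t := by
      have h0 := hasDerivAt_sqnormA (A := A) (D := rhs a) (hA t)
      rw [← ha, trace_rhs_mulT] at h0
      convert h0 using 1; ring
    have hinv : HasDerivAt (fun s => (sqnorm (A s))⁻¹)
        (-(-2*k*sqnorm a - sqnorm (bkt a aᵀ)) / (sqnorm a)^2) t := hNd.inv hN0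
    have hmul : HasDerivAt (fun s => (sqnorm (A s))⁻¹ * Matrix.trace (A s * A s)) _ t :=
      hinv.mul hq
    have heq : (fun s => Matrix.trace (B s * B s))
        = fun s => (sqnorm (A s))⁻¹ * Matrix.trace (A s * A s) :=
      funext fun s => by
        rw [hB s, Matrix.smul_mul, Matrix.mul_smul, smul_smul, Matrix.trace_smul, smul_eq_mul,
          ← mul_inv, Real.mul_self_sqrt (hpos s).le]
    rw [heq]
    convert hmul using 1
    rw [hB t, bkt_smul, sqnorm_smul, Matrix.smul_mul, Matrix.mul_smul, smul_smul,
      Matrix.trace_smul, smul_eq_mul]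
    rw [← hss]
    field_simp
    rw [Real.sqrt_sq (Real.sqrt_nonneg _), ← ha]
    ring
  refine ⟨key1, key2, ?_⟩
  -- continuity
  have hAc : Continuous A := continuous_pi fun i => continuous_pi fun j =>
    continuous_iff_continuousAt.mpr fun t => (hA t i j).continuousAt
  have hNc : Continuous fun s => sqnorm (A s) := by
    unfold sqnorm frob
    exact (hAc.matrix_mul hAc.matrix_transpose).matrix_trace
  have hCc : Continuous fun s => sqnorm (bkt (A s) (A s)ᵀ) := by
    have h1 : Continuous fun s => bkt (A s) (A s)ᵀ := by
      unfold bkt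
      exact (hAc.matrix_mul hAc.matrix_transpose).sub (hAc.matrix_transpose.matrix_mul hAc)
    unfold sqnorm frob
    exact (h1.matrix_mul h1.matrix_transpose).matrix_trace
  -- coefficients
  set c1 : ℝ → ℝ := fun t => sqnorm (bkt (A t) (A t)ᵀ) / (2 * sqnorm (A t)) with hc1def
  set c2 : ℝ → ℝ := fun t => sqnorm (bkt (A t) (A t)ᵀ) / sqnorm (A t) with hc2def
  have hc1 : Continuous c1 := hCc.div (continuous_const.mul hNc)
    (fun t => by have := hpos t; positivity)
  have hc2 : Continuous c2 := hCc.div hNc (fun t => ne_of_gt (hpos t))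
  have e1 : ∀ t, (1/2) * sqnorm (A t) * sqnorm (bkt (B t) (B t)ᵀ) = c1 t := by
    intro t
    have h := hpos t
    rw [hB t, bkt_smul, sqnorm_smul, ← mul_inv, Real.mul_self_sqrt h.le, hc1def]
    field_simp
  have e2 : ∀ t, sqnorm (A t) * sqnorm (bkt (B t) (B t)ᵀ) = c2 t := by
    intro t
    have h := hpos t
    rw [hB t, bkt_smul, sqnorm_smul, ← mul_inv, Real.mul_self_sqrt h.le, hc2def]
    field_simp
  intro s t
  constructor
  · exact sign_const_of_linODE _ c1 hc1 (fun u => by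
      have h := key1 u; rwa [e1 u] at h) s t
  · exact sign_const_of_linODE _ c2 hc2 (fun u => by
      have h := key2 u; rwa [e2 u] at h) s t
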